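/- Variable-elimination correctness (one step): let φ₁, …, φₙ be factors over variable sets 𝐗₁, …, 𝐗ₙ and let X be a variable. Let I = {i : X ∈ 𝐗ᵢ} and J its complement. Then ∑_X (⨀ᵢ φᵢ) = (⨀_{j ∈ J} φⱼ) ⊙ (∑_X ⨀_{i ∈ I} φᵢ). -/
import Mathlib


open Finset

/-- A factor over a set `S` of variables: a function on total instantiations
that only depends on the values of the variables in `S`. -/
def FDependsOn {V : Type*} {Val : V → Type*}
    (φ : (∀ v, Val v) → NNReal) (S : Finset V) : Prop :=
  ∀ a b : ∀ v, Val v, (∀ v ∈ S, a v = b v) → φ a = φ b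

/-- Summing out the variables in `Z` from a factor. -/
def fsumOut {V : Type*} [DecidableEq V] {Val : V → Type*} [∀ v, Fintype (Val v)]
    (Z : Finset V) (φ : (∀ v, Val v) → NNReal) : (∀ v, Val v) → NNReal :=
  fun a => ∑ z : (∀ v : Z, Val v), φ (fun v => if h : v ∈ Z then z ⟨v, h⟩ else a v)


/-- Variable elimination, one step: the sum over `X` need only be distributed
over the factors mentioning `X`. -/
theorem variable_elimination_step {V : Type*} [DecidableEq V] {Val : V → Type*}
    [∀ v, Fintype (Val v)] (n : ℕ) (XS : Fin n → Finset V)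
    (φ : Fin n → ((∀ v, Val v) → NNReal)) (x₀ : V)
    (hdep : ∀ i, FDependsOn (φ i) (XS i)) :
    fsumOut {x₀} (fun a => ∏ i : Fin n, φ i a)
      = fun a =>
          (∏ i ∈ Finset.univ.filter (fun i => x₀ ∉ XS i), φ i a)
          * fsumOut {x₀}
              (fun b => ∏ i ∈ Finset.univ.filter (fun i => x₀ ∈ XS i), φ i b) a := by
  funext a
  simp only [fsumOut]
  rw [Finset.mul_sum]
  apply Finset.sum_congr rfl
  intro z _
  rw [← Finset.prod_filter_mul_prod_filter_not Finset.univ (fun i => x₀ ∉ XS i)]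
  congr 1
  · apply Finset.prod_congr rfl
    intro i hi
    simp only [Finset.mem_filter] at hi
    apply hdep i
    intro v hv
    rw [dif_neg]
    intro h
    simp only [Finset.mem_singleton] at h
    subst h
    exact hi.2 hv
  · apply Finset.prod_congr ?_ (fun _ _ => rfl)
    ext i
    simp [not_not]
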